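/- Let S be a finite set of channels generating an AVQC {N_s}_{s∈S}, l ∈ ℕ, and T ∈ QC(H^{⊗l}, S^l) a quantum-classical channel with POVM {E_{s^l}} such that the map M^l_{T,S}(a ⊗ b) := ∑_{s^l} tr(E_{s^l} a) N_{s^l}(b) is symmetric: M^l_{T,S}(a ⊗ b) = M^l_{T,S}(b ⊗ a) for all a, b ∈ B(H)^{⊗l}. Then there exists T̃ ∈ QC(H, S) with POVM {Ẽ_s} such that M_{T̃,S}(a ⊗ b) := ∑_s tr(Ẽ_s a) N_s(b) satisfies M_{T̃,S}(a ⊗ b) = M_{T̃,S}(b ⊗ a) for all a, b ∈ B(H). That is, l-qc-symmetrizability implies qc-symmetrizability. -/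

import Mathlib

open scoped ComplexOrder

/-- Kraus characterization of quantum channels (CPTP maps). -/
def IsCPTP {ι κ : Type*} [Fintype ι] [DecidableEq ι] [Fintype κ] [DecidableEq κ]
    (N : Matrix ι ι ℂ →ₗ[ℂ] Matrix κ κ ℂ) : Prop :=
  ∃ (m : ℕ) (G : Fin m → Matrix κ ι ℂ),
    (∀ a, N a = ∑ j, G j * a * (G j).conjTranspose) ∧
      (∑ j, (G j).conjTranspose * G j = 1)

/-- The elementary tensor `a₁ ⊗ ⋯ ⊗ a_l` of matrices. -/
def elemTensor {ι : Type*} {l : ℕ} (a : Fin l → Matrix ι ι ℂ) :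
    Matrix (Fin l → ι) (Fin l → ι) ℂ :=
  Matrix.of fun x y => ∏ i, a i (x i) (y i)

lemma trace_of_cptp {ι κ : Type*} [Fintype ι] [DecidableEq ι] [Fintype κ] [DecidableEq κ]
    (N : Matrix ι ι ℂ →ₗ[ℂ] Matrix κ κ ℂ) (hN : IsCPTP N) (a : Matrix ι ι ℂ) :
    (N a).trace = a.trace := by
  obtain ⟨m, G, hG, hsum⟩ := hN
  rw [hG, Matrix.trace_sum]
  have h : ∀ j, (G j * a * (G j).conjTranspose).trace
      = ((G j).conjTranspose * G j * a).trace := fun j => by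
    rw [Matrix.trace_mul_comm, ← Matrix.mul_assoc]
  simp_rw [h]
  rw [← Matrix.trace_sum, ← Finset.sum_mul, hsum, one_mul]

lemma psd_smul {n : Type*} [Fintype n] {M : Matrix n n ℂ} (hM : M.PosSemidef)
    {c : ℂ} (hc : 0 ≤ c) : (c • M).PosSemidef := by
  have hsc : star c = c := by
    have him : c.im = 0 := by
      have := (Complex.le_def.mp hc).2; simpa using this.symm
    apply Complex.ext <;> simp [him]
  constructor
  · unfold Matrix.IsHermitian
    rw [Matrix.conjTranspose_smul, hsc, hM.1]
  · intro x
    exact (hM.smul hc).2 x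

lemma psd_sum {n : Type*} [Fintype n] {β : Type*} (s : Finset β) (f : β → Matrix n n ℂ)
    (h : ∀ b ∈ s, (f b).PosSemidef) : (∑ b ∈ s, f b).PosSemidef :=
  Finset.sum_induction f _ (fun _ _ ha hb => ha.add hb) Matrix.PosSemidef.zero h

def glueAt {n : Type*} [DecidableEq n] (i0 : n) {α : Type*} (u : α)
    (w : {j : n // j ≠ i0} → α) : n → α :=
  fun i => if h : i = i0 then u else w ⟨i, h⟩

@[simp] lemma glueAt_self {n : Type*} [DecidableEq n] (i0 : n) {α : Type*} (u : α)
    (w : {j : n // j ≠ i0} → α) : glueAt i0 u w i0 = u := dif_pos rfl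

@[simp] lemma glueAt_ne {n : Type*} [DecidableEq n] (i0 : n) {α : Type*} (u : α)
    (w : {j : n // j ≠ i0} → α) (j : {j : n // j ≠ i0}) : glueAt i0 u w j.1 = w j := by
  rw [glueAt, dif_neg j.2]

def glueEquiv {n : Type*} [DecidableEq n] (i0 : n) (α : Type*) :
    (n → α) ≃ α × ({j : n // j ≠ i0} → α) where
  toFun f := (f i0, fun j => f j.1)
  invFun p := glueAt i0 p.1 p.2
  left_inv f := by
    funext i
    by_cases h : i = i0
    · subst h; exact glueAt_self _ _ _
    · exact dif_neg h
  right_inv p := by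
    ext j
    · exact glueAt_self _ _ _
    · exact glueAt_ne _ _ _ _

lemma sum_glue {n : Type*} [DecidableEq n] [Fintype n] (i0 : n) {α : Type*} [Fintype α]
    {M : Type*} [AddCommMonoid M] (f : (n → α) → M) :
    ∑ g : n → α, f g = ∑ u : α, ∑ w : {j : n // j ≠ i0} → α, f (glueAt i0 u w) := by
  rw [← ((glueEquiv i0 α).symm.sum_comp f), Fintype.sum_prod_type]
  rfl

lemma prod_glue_split {n : Type*} [DecidableEq n] [Fintype n] (i0 : n)
    {M : Type*} [CommMonoid M] (F : n → M) :
    ∏ i, F i = F i0 * ∏ j : {j : n // j ≠ i0}, F j.1 := by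
  rw [Fintype.prod_eq_mul_prod_compl i0 F]
  congr 1
  exact Finset.prod_subtype ({i0}ᶜ : Finset n) (fun x => by simp) F

/-- `l`-qc-symmetrizability implies qc-symmetrizability.  If there is a
POVM `{E_{s^l}}` on `H^{⊗l}` such that
`M^l(a ⊗ b) = ∑_{s^l} tr(E_{s^l} a) N_{s^l}(b)` is symmetric in `a, b`, then there is
a POVM `{Ẽ_s}` on `H` such that `∑_s tr(Ẽ_s a) N_s(b) = ∑_s tr(Ẽ_s b) N_s(a)` for all
`a, b ∈ B(H)`.  Here `N_{s^l} = N_{s₁} ⊗ ⋯ ⊗ N_{s_l}` is given by the family `NT`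
characterized on elementary tensors. -/
theorem stmt_14 {ι κ S : Type*} [Fintype ι] [DecidableEq ι] [Nonempty ι]
    [Fintype κ] [DecidableEq κ] [Fintype S]
    (Ns : S → (Matrix ι ι ℂ →ₗ[ℂ] Matrix κ κ ℂ)) (hNs : ∀ s, IsCPTP (Ns s))
    (l : ℕ) (hl : 0 < l)
    (NT : (Fin l → S) → (Matrix (Fin l → ι) (Fin l → ι) ℂ →ₗ[ℂ]
      Matrix (Fin l → κ) (Fin l → κ) ℂ))
    (hNT : ∀ (sl : Fin l → S) (a : Fin l → Matrix ι ι ℂ),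
      NT sl (elemTensor a) = elemTensor fun i => Ns (sl i) (a i))
    (E : (Fin l → S) → Matrix (Fin l → ι) (Fin l → ι) ℂ)
    (hEpsd : ∀ sl, (E sl).PosSemidef) (hEsum : ∑ sl, E sl = 1)
    (hsym : ∀ a b : Matrix (Fin l → ι) (Fin l → ι) ℂ,
      ∑ sl, (E sl * a).trace • NT sl b = ∑ sl, (E sl * b).trace • NT sl a) :
    ∃ Et : S → Matrix ι ι ℂ,
      (∀ s, (Et s).PosSemidef) ∧ (∑ s, Et s = 1) ∧
      ∀ a b : Matrix ι ι ℂ,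
        ∑ s, (Et s * a).trace • Ns s b = ∑ s, (Et s * b).trace • Ns s a := by
  classical
  set i0 : Fin l := ⟨0, hl⟩ with hi0def
  set d : ℂ := (Fintype.card ι : ℂ) with hd
  set m : ℂ := (Fintype.card ({j : Fin l // j ≠ i0} → ι) : ℂ) with hm
  have hd0 : d ≠ 0 := by
    rw [hd]; exact_mod_cast Fintype.card_ne_zero
  have hm0 : m ≠ 0 := by
    rw [hm]; exact_mod_cast Fintype.card_ne_zero
  have hmd : m = d ^ Fintype.card {j : Fin l // j ≠ i0} := by
    rw [hm, hd, Fintype.card_fun]; push_cast; ring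
  have hminv_nonneg : (0:ℂ) ≤ m⁻¹ := by
    have h1 : m = (((Fintype.card ({j : Fin l // j ≠ i0} → ι) : ℝ)) : ℂ) := by
      rw [hm]; norm_cast
    rw [h1, ← Complex.ofReal_inv]
    exact Complex.zero_le_real.mpr (inv_nonneg.mpr (Nat.cast_nonneg _))
  -- the marginal POVM
  set sub : (Fin l → S) → ({j : Fin l // j ≠ i0} → ι) → Matrix ι ι ℂ := fun sl w =>
    (E sl).submatrix (fun u => glueAt i0 u w) (fun u => glueAt i0 u w) with hsub
  set Et : S → Matrix ι ι ℂ := fun s =>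
    m⁻¹ • ∑ sl ∈ Finset.univ.filter (fun sl => sl i0 = s),
      ∑ w : {j : Fin l // j ≠ i0} → ι, sub sl w with hEt
  -- the test observables on the big space
  set F : Matrix ι ι ℂ → Fin l → Matrix ι ι ℂ :=
    fun a i => if i = i0 then a else d⁻¹ • 1 with hF
  have hFi0 : ∀ a, F a i0 = a := fun a => if_pos rfl
  have hFne : ∀ a (j : {j : Fin l // j ≠ i0}), F a j.1 = d⁻¹ • 1 := fun a j => if_neg j.2
  refine ⟨Et, ?_, ?_, ?_⟩
  · -- positive semidefiniteness
    intro s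
    exact psd_smul (psd_sum _ _ fun sl _ => psd_sum _ _ fun w _ =>
      (hEpsd sl).submatrix _) hminv_nonneg
  · -- sums to one
    rw [hEt]
    simp only
    rw [← Finset.smul_sum, Finset.sum_fiberwise Finset.univ (fun sl => sl i0)
      (fun sl => ∑ w : {j : Fin l // j ≠ i0} → ι, sub sl w), Finset.sum_comm]
    have h1 : ∀ w : {j : Fin l // j ≠ i0} → ι, ∑ sl, sub sl w = (1 : Matrix ι ι ℂ) := by
      intro w
      have h2 : ∑ sl, sub sl w
          = (∑ sl, E sl).submatrix (fun u => glueAt i0 u w) (fun u => glueAt i0 u w) := by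
        ext p q
        simp [hsub, Matrix.sum_apply, Matrix.submatrix_apply]
      rw [h2, hEsum]
      ext p q
      have hinj : glueAt i0 p w = glueAt i0 q w ↔ p = q := by
        constructor
        · intro h; have := congrFun h i0; simpa using this
        · intro h; rw [h]
      simp [Matrix.submatrix_apply, Matrix.one_apply, hinj]
    simp_rw [h1]
    rw [Finset.sum_const, Finset.card_univ, ← Nat.cast_smul_eq_nsmul ℂ, smul_smul,
      ← hm, inv_mul_cancel₀ hm0, one_smul]
  · -- symmetrizability
    -- Step A: trace of marginal against `a` = sum of traces upstairs
    have claimA : ∀ (a : Matrix ι ι ℂ) (sl : Fin l → S),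
        (E sl * elemTensor (F a)).trace = m⁻¹ * ∑ w, (sub sl w * a).trace := by
      intro a sl
      have lhs1 : (E sl * elemTensor (F a)).trace
          = ∑ f : Fin l → ι, ∑ g : Fin l → ι, E sl f g * ∏ i, F a i (g i) (f i) := by
        simp [Matrix.trace, Matrix.mul_apply, Matrix.diag, elemTensor]
      rw [lhs1]
      rw [sum_glue i0]
      have step1 : ∀ (u : ι) (w : {j : Fin l // j ≠ i0} → ι),
          (∑ g : Fin l → ι, E sl (glueAt i0 u w) g * ∏ i, F a i (g i) (glueAt i0 u w i))
          = ∑ v : ι, E sl (glueAt i0 u w) (glueAt i0 v w) * (a v u * m⁻¹) := by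
        intro u w
        rw [sum_glue i0]
        have hprod : ∀ (v : ι) (w' : {j : Fin l // j ≠ i0} → ι),
            ∏ i, F a i (glueAt i0 v w' i) (glueAt i0 u w i)
              = a v u * (m⁻¹ * if w' = w then 1 else 0) := by
          intro v w'
          rw [prod_glue_split i0]
          simp only [glueAt_self, glueAt_ne, hFi0]
          congr 1
          calc ∏ j : {j : Fin l // j ≠ i0}, F a j.1 (w' j) (w j)
              = ∏ j : {j : Fin l // j ≠ i0}, (d⁻¹ * if w' j = w j then 1 else 0) := by
                refine Finset.prod_congr rfl fun j _ => ?_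
                rw [hFne a j, Matrix.smul_apply, Matrix.one_apply, smul_eq_mul]
            _ = d⁻¹ ^ (Fintype.card {j : Fin l // j ≠ i0})
                  * ∏ j, (if w' j = w j then (1:ℂ) else 0) := by
                rw [Finset.prod_mul_distrib, Finset.prod_const, Finset.card_univ]
            _ = m⁻¹ * if w' = w then 1 else 0 := by
                rw [Fintype.prod_boole, hmd, ← inv_pow]
                congr 1
                simp [← funext_iff]
        simp_rw [hprod]
        refine Finset.sum_congr rfl fun v _ => ?_
        rw [Finset.sum_eq_single w]
        · simp
        · intro w' _ hw'; simp [hw']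
        · intro h; exact absurd (Finset.mem_univ w) h
      simp_rw [step1]
      rw [Finset.mul_sum]
      rw [Finset.sum_comm]
      refine Finset.sum_congr rfl fun w _ => ?_
      have htr : (sub sl w * a).trace
          = ∑ u : ι, ∑ v : ι, E sl (glueAt i0 u w) (glueAt i0 v w) * a v u := by
        simp [hsub, Matrix.trace, Matrix.mul_apply, Matrix.diag, Matrix.submatrix_apply]
      rw [htr, Finset.mul_sum]
      refine Finset.sum_congr rfl fun u _ => ?_
      rw [Finset.mul_sum]
      exact Finset.sum_congr rfl fun v _ => by ring
    -- Step A': trace of Et against a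
    have stepA : ∀ (s : S) (a : Matrix ι ι ℂ),
        (Et s * a).trace = ∑ sl ∈ Finset.univ.filter (fun sl => sl i0 = s),
          (E sl * elemTensor (F a)).trace := by
      intro s a
      rw [hEt]
      simp only
      rw [smul_mul_assoc, Matrix.trace_smul, smul_eq_mul, Finset.sum_mul, Matrix.trace_sum]
      rw [Finset.mul_sum]
      refine Finset.sum_congr rfl fun sl _ => ?_
      rw [Finset.sum_mul, Matrix.trace_sum, claimA a sl]
    -- Step B: partial trace of NT sl (elemTensor (F b))
    have claimB : ∀ (b : Matrix ι ι ℂ) (sl : Fin l → S) (x y : κ),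
        ∑ wκ : {j : Fin l // j ≠ i0} → κ,
          (NT sl (elemTensor (F b))) (glueAt i0 x wκ) (glueAt i0 y wκ)
        = (Ns (sl i0) b) x y := by
      intro b sl x y
      rw [hNT]
      have h1 : ∀ wκ : {j : Fin l // j ≠ i0} → κ,
          (elemTensor fun i => Ns (sl i) (F b i)) (glueAt i0 x wκ) (glueAt i0 y wκ)
            = (Ns (sl i0) b) x y
              * ∏ j : {j : Fin l // j ≠ i0},
                  (Ns (sl j.1) (d⁻¹ • (1 : Matrix ι ι ℂ))) (wκ j) (wκ j) := by
        intro wκ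
        show (∏ i, (Ns (sl i) (F b i)) (glueAt i0 x wκ i) (glueAt i0 y wκ i)) = _
        rw [prod_glue_split i0]
        simp only [glueAt_self, glueAt_ne]
        rw [hFi0]
        congr 1
        exact Finset.prod_congr rfl fun j _ => by rw [hFne b j]
      simp_rw [h1]
      rw [← Finset.mul_sum]
      have h2 : ∑ wκ : {j : Fin l // j ≠ i0} → κ,
          ∏ j : {j : Fin l // j ≠ i0}, (Ns (sl j.1) (d⁻¹ • (1:Matrix ι ι ℂ))) (wκ j) (wκ j)
          = ∏ j : {j : Fin l // j ≠ i0}, (Ns (sl j.1) (d⁻¹ • (1:Matrix ι ι ℂ))).trace := by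
        have hp := Finset.prod_univ_sum
          (fun _ : {j : Fin l // j ≠ i0} => (Finset.univ : Finset κ))
          (fun j t => (Ns (sl j.1) (d⁻¹ • (1:Matrix ι ι ℂ))) t t)
        rw [Fintype.piFinset_univ] at hp
        rw [← hp]
        refine Finset.prod_congr rfl fun j _ => ?_
        simp [Matrix.trace, Matrix.diag]
      rw [h2]
      have h3 : ∀ j : {j : Fin l // j ≠ i0},
          (Ns (sl j.1) (d⁻¹ • (1:Matrix ι ι ℂ))).trace = 1 := by
        intro j
        rw [trace_of_cptp _ (hNs _), Matrix.trace_smul, Matrix.trace_one, smul_eq_mul,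
          ← hd, inv_mul_cancel₀ hd0]
      simp_rw [h3]
      rw [Finset.prod_const_one, mul_one]
    -- main entrywise computation
    have main : ∀ (a b : Matrix ι ι ℂ) (x y : κ),
        (∑ s, (Et s * a).trace • Ns s b) x y
          = ∑ wκ : {j : Fin l // j ≠ i0} → κ,
              (∑ sl, (E sl * elemTensor (F a)).trace • NT sl (elemTensor (F b)))
                (glueAt i0 x wκ) (glueAt i0 y wκ) := by
      intro a b x y
      have rhs1 : ∀ wκ : {j : Fin l // j ≠ i0} → κ,
          (∑ sl, (E sl * elemTensor (F a)).trace • NT sl (elemTensor (F b)))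
              (glueAt i0 x wκ) (glueAt i0 y wκ)
          = ∑ sl, (E sl * elemTensor (F a)).trace
              * (NT sl (elemTensor (F b))) (glueAt i0 x wκ) (glueAt i0 y wκ) := by
        intro wκ
        rw [Matrix.sum_apply]
        exact Finset.sum_congr rfl fun sl _ => by rw [Matrix.smul_apply, smul_eq_mul]
      simp_rw [rhs1]
      rw [Finset.sum_comm]
      have rhs2 : ∀ sl : Fin l → S,
          ∑ wκ : {j : Fin l // j ≠ i0} → κ, (E sl * elemTensor (F a)).trace
              * (NT sl (elemTensor (F b))) (glueAt i0 x wκ) (glueAt i0 y wκ)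
          = (E sl * elemTensor (F a)).trace * (Ns (sl i0) b) x y := by
        intro sl
        rw [← Finset.mul_sum, claimB b sl x y]
      simp_rw [rhs2]
      rw [Matrix.sum_apply]
      have lhs1 : ∀ s : S, ((Et s * a).trace • Ns s b) x y
          = ∑ sl ∈ Finset.univ.filter (fun sl => sl i0 = s),
              (E sl * elemTensor (F a)).trace * (Ns (sl i0) b) x y := by
        intro s
        rw [Matrix.smul_apply, smul_eq_mul, stepA s a, Finset.sum_mul]
        refine Finset.sum_congr rfl fun sl hsl => ?_
        rw [(Finset.mem_filter.mp hsl).2]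
      simp_rw [lhs1]
      exact Finset.sum_fiberwise Finset.univ (fun sl => sl i0)
        (fun sl => (E sl * elemTensor (F a)).trace * (Ns (sl i0) b) x y)
    intro a b
    ext x y
    rw [main a b x y, main b a x y, hsym (elemTensor (F a)) (elemTensor (F b))]
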